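/- Let M ∈ Sym_n(ℤ) be nonsingular and let P = {p₁, …, p_l} be a nonempty finite set of primes. For each pᵢ ∈ P set e_{pᵢ} = Dep_{pᵢ}(Cok(M)_{pᵢ}) + 3 if pᵢ = 2 and e_{pᵢ} = Dep_{pᵢ}(Cok(M)_{pᵢ}) + 1 if pᵢ is odd, and let a = p₁^{e_{p₁}} ⋯ p_l^{e_{p_l}}. Then for every ΔM ∈ Sym_n(ℤ) all of whose entries are divisible by a, the matrix M + ΔM is nonsingular and for every p ∈ P the paired cokernels (Cok(M + ΔM)_p,⟨·,·⟩_p) and (Cok(M)_p,⟨·,·⟩_p) are isomorphic. -/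

import Mathlib

open Matrix MeasureTheory

/-- Congruence of square matrices over `R`: `B = U * A * Uᵀ` for some `U ∈ GL`. -/
def Matrix.Congruent {R : Type*} [CommRing R] {ι : Type*} [Fintype ι] [DecidableEq ι]
    (A B : Matrix ι ι R) : Prop :=
  ∃ U : (Matrix ι ι R)ˣ, (U : Matrix ι ι R) * A * (U : Matrix ι ι R)ᵀ = B

/-- Congruence of square matrices indexed by two (necessarily equipotent) index types. -/
def Matrix.CongruentTo {R : Type*} [CommRing R] {ι κ : Type*} [Fintype ι] [DecidableEq ι]
    [Fintype κ] [DecidableEq κ] (A : Matrix ι ι R) (B : Matrix κ κ R) : Prop :=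
  ∃ e : ι ≃ κ, (A.submatrix e.symm e.symm).Congruent B

/-- The cokernel `R^ι / M R^ι` of a square matrix `M`. -/
abbrev Matrix.Cok {R : Type*} [CommRing R] {ι : Type*} [Fintype ι] (M : Matrix ι ι R) :=
  (ι → R) ⧸ LinearMap.range M.mulVecLin

/-- The pairing value `Xᵀ M⁻¹ Y ∈ ℚ_p`, the inverse being taken over `ℚ_p`. -/
noncomputable def pairVal {p : ℕ} [Fact p.Prime] {ι : Type*} [Fintype ι] [DecidableEq ι]
    (M : Matrix ι ι ℤ_[p]) (X Y : ι → ℤ_[p]) : ℚ_[p] :=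
  (fun i => (X i : ℚ_[p])) ⬝ᵥ ((M.map (fun a => (a : ℚ_[p])))⁻¹).mulVec (fun i => (Y i : ℚ_[p]))

/-- Isomorphism of cokernels together with their symmetric pairings: a group isomorphism
`Cok M ≃ Cok M'` such that for any lifts, the pairing values agree modulo `ℤ_p`. -/
def PairedIso {p : ℕ} [Fact p.Prime] {ι κ : Type*} [Fintype ι] [DecidableEq ι] [Fintype κ]
    [DecidableEq κ] (M : Matrix ι ι ℤ_[p]) (M' : Matrix κ κ ℤ_[p]) : Prop :=
  ∃ e : M.Cok ≃+ M'.Cok,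
    ∀ (X Y : ι → ℤ_[p]) (X' Y' : κ → ℤ_[p]),
      e (Submodule.Quotient.mk X) = Submodule.Quotient.mk X' →
      e (Submodule.Quotient.mk Y) = Submodule.Quotient.mk Y' →
      ‖pairVal M X Y - pairVal M' X' Y'‖ ≤ 1

open Matrix

namespace S14
variable {p : ℕ} [hp : Fact p.Prime] {n : ℕ}

/-- coefficient-wise coercion of matrices -/
noncomputable def mc (A : Matrix (Fin n) (Fin n) ℤ_[p]) : Matrix (Fin n) (Fin n) ℚ_[p] :=
  A.map (fun a => (a : ℚ_[p]))

lemma mc_mul (A B : Matrix (Fin n) (Fin n) ℤ_[p]) : mc (A * B) = mc A * mc B :=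
  Matrix.map_mul (f := PadicInt.Coe.ringHom)

lemma mc_add (A B : Matrix (Fin n) (Fin n) ℤ_[p]) : mc (A + B) = mc A + mc B :=
  Matrix.map_add _ (by simp) _ _

lemma mc_one : mc (1 : Matrix (Fin n) (Fin n) ℤ_[p]) = 1 :=
  Matrix.map_one _ (by simp) (by simp)

lemma mc_transpose (A : Matrix (Fin n) (Fin n) ℤ_[p]) : mc Aᵀ = (mc A)ᵀ :=
  Matrix.transpose_map

lemma mc_inj {A B : Matrix (Fin n) (Fin n) ℤ_[p]} (h : mc A = mc B) : A = B := by
  ext i j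
  exact Subtype.coe_injective (by simpa [mc, Matrix.map_apply] using congrFun (congrFun h i) j)

lemma mc_smul (z : ℤ_[p]) (A : Matrix (Fin n) (Fin n) ℤ_[p]) :
    mc (z • A) = (z : ℚ_[p]) • mc A := by
  ext i j; simp [mc, Matrix.map_apply]

lemma mc_pow_smul (k : ℕ) (A : Matrix (Fin n) (Fin n) ℤ_[p]) :
    mc ((p : ℤ_[p]) ^ k • A) = (p : ℚ_[p]) ^ k • mc A := by
  rw [mc_smul]; push_cast; ring_nf

lemma pK_ne : ((p : ℚ_[p])) ≠ 0 := by
  exact_mod_cast (Nat.cast_ne_zero (R := ℚ_[p])).2 hp.out.ne_zero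

/-- integral invertibility -/
def IntU (U : Matrix (Fin n) (Fin n) ℚ_[p]) : Prop :=
  ∃ U₀ : (Matrix (Fin n) (Fin n) ℤ_[p])ˣ, mc (U₀ : Matrix (Fin n) (Fin n) ℤ_[p]) = U

/-- divisibility by p^k of an integral matrix, over ℚ_p -/
def PD (k : ℕ) (A : Matrix (Fin n) (Fin n) ℚ_[p]) : Prop :=
  ∃ A₀ : Matrix (Fin n) (Fin n) ℤ_[p], A = (p : ℚ_[p]) ^ k • mc A₀

lemma PD_mono {j k : ℕ} (hjk : j ≤ k) {A : Matrix (Fin n) (Fin n) ℚ_[p]} (h : PD k A) :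
    PD j A := by
  obtain ⟨A₀, rfl⟩ := h
  exact ⟨(p : ℤ_[p]) ^ (k - j) • A₀, by
    rw [mc_pow_smul, smul_smul, ← pow_add, Nat.add_sub_cancel' hjk]⟩

/-- matrices congruent to 1 mod p are invertible over ℤ_p -/
lemma isUnit_one_add {c : ℕ} (hc : 1 ≤ c) (G : Matrix (Fin n) (Fin n) ℤ_[p]) :
    IsUnit (1 + (p : ℤ_[p]) ^ c • G) := by
  rw [Matrix.isUnit_iff_isUnit_det]
  have hmap : (1 + (p : ℤ_[p]) ^ c • G).map (PadicInt.toZMod : ℤ_[p] → ZMod p)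
      = (1 : Matrix (Fin n) (Fin n) (ZMod p)) := by
    ext i j
    simp only [Matrix.map_apply, Matrix.add_apply, Matrix.smul_apply, smul_eq_mul]
    rw [_root_.map_add, _root_.map_mul, _root_.map_pow, map_natCast, ZMod.natCast_self]
    simp [zero_pow (by omega : c ≠ 0), Matrix.one_apply, apply_ite (PadicInt.toZMod)]
  have hdet : PadicInt.toZMod ((1 + (p : ℤ_[p]) ^ c • G).det) = 1 := by
    rw [RingHom.map_det]
    show ((1 + (p : ℤ_[p]) ^ c • G).map PadicInt.toZMod).det = 1
    rw [hmap, Matrix.det_one]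
  by_contra h
  have hmem : (1 + (p : ℤ_[p]) ^ c • G).det ∈ IsLocalRing.maximalIdeal ℤ_[p] :=
    (IsLocalRing.mem_maximalIdeal _).2 h
  rw [← PadicInt.ker_toZMod, RingHom.mem_ker] at hmem
  rw [hmem] at hdet
  exact one_ne_zero hdet.symm


open Matrix

def v2 (p : ℕ) : ℕ := if p = 2 then 1 else 0

lemma two_eq : ∃ u : ℤ_[p]ˣ, (u : ℤ_[p]) * (p : ℤ_[p]) ^ (v2 p) = 2 := by
  by_cases h2 : p = 2
  · subst h2
    exact ⟨1, by norm_num [v2]⟩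
  · have hnorm : ‖((2 : ℤ) : ℤ_[p])‖ = 1 := by
      refine le_antisymm (PadicInt.norm_le_one _) ?_
      by_contra h
      push_neg at h
      have := (PadicInt.norm_int_lt_one_iff_dvd 2).1 h
      have hdvd : p ∣ 2 := by exact_mod_cast this
      exact h2 ((Nat.prime_dvd_prime_iff_eq hp.out Nat.prime_two).1 hdvd)
    have : IsUnit (2 : ℤ_[p]) := PadicInt.isUnit_iff.2 (by simpa using hnorm)
    obtain ⟨u, hu⟩ := this
    exact ⟨u, by simp [v2, h2, hu]⟩

lemma newton (M B : Matrix (Fin n) (Fin n) ℤ_[p]) (d : ℕ)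
    (hMs : (mc M)ᵀ = mc M) (hMB : mc M * mc B = (p : ℚ_[p]) ^ d • 1) :
    ∀ (t c : ℕ), 2 * v2 p + 1 ≤ c → d + 1 ≤ c + t →
      ∀ F : Matrix (Fin n) (Fin n) ℚ_[p], Fᵀ = F → PD (d + c) F →
      ∃ U R : Matrix (Fin n) (Fin n) ℚ_[p], IntU U ∧
        U * (mc M + F) * Uᵀ = mc M + R ∧ Rᵀ = R ∧ PD (2 * d + 1) R := by
  intro t
  induction t with
  | zero =>
    intro c hc hdc F hFs hFd
    exact ⟨1, F, ⟨1, by simp [mc_one, Units.val_one]⟩, by simp, hFs,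
      PD_mono (by omega) hFd⟩
  | succ s ih =>
    intro c hc hdc F hFs hFd
    by_cases hcd : d + 1 ≤ c
    · exact ⟨1, F, ⟨1, by simp [mc_one, Units.val_one]⟩, by simp, hFs,
        PD_mono (by omega) hFd⟩
    obtain ⟨F₀, rfl⟩ := hFd
    obtain ⟨u, hu⟩ := two_eq (p := p)
    set v := v2 p with hv
    have hc1 : 1 ≤ c := by omega
    have hvc : v ≤ c := by omega
    obtain ⟨Su, hSu⟩ := isUnit_one_add hc1 (B * F₀)
    set Mk := mc M with hMk
    set Bk := mc B with hBk
    set Fk := mc F₀ with hFk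
    set F : Matrix (Fin n) (Fin n) ℚ_[p] := (p : ℚ_[p]) ^ (d + c) • Fk with hF
    -- coercion of the unit S
    have hSuk : mc (Su : Matrix (Fin n) (Fin n) ℤ_[p]) = 1 + (p : ℚ_[p]) ^ c • (Bk * Fk) := by
      rw [hSu, mc_add, mc_one, mc_pow_smul, mc_mul]
    -- M * S = M + F
    have hMS : Mk * mc (Su : Matrix (Fin n) (Fin n) ℤ_[p]) = Mk + F := by
      rw [hSuk, Matrix.mul_add, Matrix.mul_one, Matrix.mul_smul, ← Matrix.mul_assoc, hMB,
        Matrix.smul_mul, Matrix.one_mul, smul_smul, ← pow_add, hF]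
      ring_nf
    -- the inverse G of M + F
    set Sik := mc ((Su⁻¹ : (Matrix (Fin n) (Fin n) ℤ_[p])ˣ) : Matrix (Fin n) (Fin n) ℤ_[p])
      with hSik
    have hSSi : mc (Su : Matrix (Fin n) (Fin n) ℤ_[p]) * Sik = 1 := by
      rw [hSik, ← mc_mul, Units.mul_inv, mc_one]
    set G : Matrix (Fin n) (Fin n) ℚ_[p] := ((p : ℚ_[p]) ^ d)⁻¹ • (Sik * Bk) with hG
    have hpd : ((p : ℚ_[p]) ^ d) ≠ 0 := pow_ne_zero _ pK_ne
    have hMFG : (Mk + F) * G = 1 := by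
      rw [← hMS, hG, Matrix.mul_smul, Matrix.mul_assoc, ← Matrix.mul_assoc
        (mc (Su : Matrix (Fin n) (Fin n) ℤ_[p])), hSSi, Matrix.one_mul, hMB,
        smul_smul, inv_mul_cancel₀ hpd, one_smul]
    have hGMF : G * (Mk + F) = 1 := mul_eq_one_comm.mp hMFG
    have hMFt : (Mk + F)ᵀ = Mk + F := by rw [Matrix.transpose_add, hMs, hFs]
    have hGt : Gᵀ = G := by
      have h1 : Gᵀ * (Mk + F) = 1 := by
        calc Gᵀ * (Mk + F) = Gᵀ * (Mk + F)ᵀ := by rw [hMFt]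
        _ = ((Mk + F) * G)ᵀ := by rw [Matrix.transpose_mul]
        _ = 1 := by rw [hMFG, Matrix.transpose_one]
      calc Gᵀ = Gᵀ * ((Mk + F) * G) := by rw [hMFG, Matrix.mul_one]
      _ = (Gᵀ * (Mk + F)) * G := by rw [Matrix.mul_assoc]
      _ = G := by rw [h1, Matrix.one_mul]
    -- the scalar bookkeeping
    set uk : ℚ_[p] := ((u : ℤ_[p]) : ℚ_[p]) with huk
    set uik : ℚ_[p] := (((u⁻¹ : ℤ_[p]ˣ) : ℤ_[p]) : ℚ_[p]) with huik
    have huui : uk * uik = 1 := by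
      rw [huk, huik, ← PadicInt.coe_mul, Units.mul_inv, PadicInt.coe_one]
    have h2K : uk * (p : ℚ_[p]) ^ v = 2 := by
      have := congrArg (fun z : ℤ_[p] => (z : ℚ_[p])) hu
      push_cast at this
      simpa [huk] using this.trans (PadicInt.coe_natCast 2)
    have h2ne : (2 : ℚ_[p]) ≠ 0 := two_ne_zero
    have hdiv : ∀ a : ℕ, v ≤ a → (2 : ℚ_[p])⁻¹ * (p : ℚ_[p]) ^ a = uik * (p : ℚ_[p]) ^ (a - v) := by
      intro a hva
      field_simp
      calc (p : ℚ_[p]) ^ a = (p : ℚ_[p]) ^ (a - v + v) := by rw [Nat.sub_add_cancel hva]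
      _ = (p : ℚ_[p]) ^ (a - v) * (p : ℚ_[p]) ^ v := pow_add _ _ _
      _ = uik * (p : ℚ_[p]) ^ (a - v) * (uk * (p : ℚ_[p]) ^ v) := by
          rw [show uik * (p : ℚ_[p]) ^ (a - v) * (uk * (p : ℚ_[p]) ^ v)
            = (uk * uik) * ((p : ℚ_[p]) ^ (a - v) * (p : ℚ_[p]) ^ v) by ring, huui, one_mul]
      _ = uik * (p : ℚ_[p]) ^ (a - v) * 2 := by rw [h2K]
      _ = 2 * uik * (p : ℚ_[p]) ^ (a - v) := by ring
    -- D
    set D : Matrix (Fin n) (Fin n) ℚ_[p] := -((2 : ℚ_[p])⁻¹) • (F * G) with hD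
    have hFG : F * G = (p : ℚ_[p]) ^ c • (Fk * (Sik * Bk)) := by
      rw [hF, hG, Matrix.smul_mul, Matrix.mul_smul, smul_smul, pow_add]
      congr 1
      field_simp
    set D₀ : Matrix (Fin n) (Fin n) ℤ_[p] :=
      (-((u⁻¹ : ℤ_[p]ˣ) : ℤ_[p])) • (F₀ * ((Su⁻¹ : (Matrix (Fin n) (Fin n) ℤ_[p])ˣ)
        : Matrix (Fin n) (Fin n) ℤ_[p]) * B) with hD₀
    have hDmc : D = (p : ℚ_[p]) ^ (c - v) • mc D₀ := by
      rw [hD, hFG, hD₀, mc_smul, smul_smul, smul_smul]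
      rw [mc_mul, mc_mul]
      congr 1
      · push_cast
        rw [show -(2 : ℚ_[p])⁻¹ * (p : ℚ_[p]) ^ c = -((2 : ℚ_[p])⁻¹ * (p : ℚ_[p]) ^ c) by ring,
          hdiv c hvc, ← huik]
        ring
      · rw [Matrix.mul_assoc]
    -- unit for 1 + D
    have hcv1 : 1 ≤ c - v := by omega
    obtain ⟨Wu, hWu⟩ := isUnit_one_add hcv1 D₀
    have hWuk : mc (Wu : Matrix (Fin n) (Fin n) ℤ_[p]) = 1 + D := by
      rw [hWu, mc_add, mc_one, mc_pow_smul, ← hDmc]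
    -- the three products
    have hDMF : D * (Mk + F) = -((2 : ℚ_[p])⁻¹) • F := by
      rw [hD, Matrix.smul_mul, Matrix.mul_assoc, hGMF, Matrix.mul_one]
    have hDt : Dᵀ = -((2 : ℚ_[p])⁻¹) • (G * F) := by
      rw [hD, Matrix.transpose_smul, Matrix.transpose_mul, hGt, hFs]
    have hMFDt : (Mk + F) * Dᵀ = -((2 : ℚ_[p])⁻¹) • F := by
      rw [hDt, Matrix.mul_smul, ← Matrix.mul_assoc, hMFG, Matrix.one_mul]
    set F' : Matrix (Fin n) (Fin n) ℚ_[p] :=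
      ((2 : ℚ_[p])⁻¹ * (2 : ℚ_[p])⁻¹) • (F * G * F) with hF'
    have hDMFDt : D * (Mk + F) * Dᵀ = F' := by
      rw [hDMF, hDt, Matrix.smul_mul, Matrix.mul_smul, smul_smul, hF']
      rw [Matrix.mul_assoc]
      congr 1
      ring
    have hstep : (1 + D) * (Mk + F) * (1 + D)ᵀ = Mk + F' := by
      have expand : (1 + D) * (Mk + F) * (1 + D)ᵀ
          = (Mk + F) + ((Mk + F) * Dᵀ + (D * (Mk + F) + D * (Mk + F) * Dᵀ)) := by
        rw [Matrix.transpose_add, Matrix.transpose_one]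
        noncomm_ring
      rw [expand, hDMFDt, hMFDt, hDMF]
      have hhalf : ((1 : ℚ_[p]) + (-(2⁻¹) + -(2⁻¹))) = 0 := by norm_num
      calc Mk + F + (-((2 : ℚ_[p])⁻¹) • F + (-((2 : ℚ_[p])⁻¹) • F + F'))
          = (Mk + F') + (((1 : ℚ_[p]) + (-(2⁻¹) + -(2⁻¹))) • F) := by
            rw [add_smul, add_smul, one_smul]
            abel
        _ = Mk + F' := by rw [hhalf, zero_smul, add_zero]
    -- divisibility of the new remainder
    have hFGF : F * G * F
        = ((p : ℚ_[p]) ^ c * (p : ℚ_[p]) ^ (d + c)) • mc (F₀ * ((Su⁻¹ :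
          (Matrix (Fin n) (Fin n) ℤ_[p])ˣ) : Matrix (Fin n) (Fin n) ℤ_[p]) * B * F₀) := by
      rw [hFG, hF, Matrix.smul_mul, Matrix.mul_smul, smul_smul, mc_mul, mc_mul, mc_mul]
      rw [← hSik, ← hBk, ← hFk]
      congr 1
      simp only [Matrix.mul_assoc]
    set c' := (c - v) + (c - v) with hc'
    have hF'd : PD (d + c') F' := by
      refine ⟨((u⁻¹ : ℤ_[p]ˣ) : ℤ_[p]) • (((u⁻¹ : ℤ_[p]ˣ) : ℤ_[p]) • (F₀ * ((Su⁻¹ :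
        (Matrix (Fin n) (Fin n) ℤ_[p])ˣ) : Matrix (Fin n) (Fin n) ℤ_[p]) * B * F₀)), ?_⟩
      rw [hF', hFGF, smul_smul, mc_smul, mc_smul, smul_smul, smul_smul]
      congr 1
      have e1 := hdiv c hvc
      have e2 := hdiv (d + c) (by omega)
      have hexp : (c - v) + (d + c - v) = d + c' := by omega
      calc (2 : ℚ_[p])⁻¹ * (2 : ℚ_[p])⁻¹ * ((p : ℚ_[p]) ^ c * (p : ℚ_[p]) ^ (d + c))
          = ((2 : ℚ_[p])⁻¹ * (p : ℚ_[p]) ^ c) * ((2 : ℚ_[p])⁻¹ * (p : ℚ_[p]) ^ (d + c)) := by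
            ring
        _ = (uik * (p : ℚ_[p]) ^ (c - v)) * (uik * (p : ℚ_[p]) ^ (d + c - v)) := by
            rw [e1, e2]
        _ = (p : ℚ_[p]) ^ ((c - v) + (d + c - v)) * (uik * uik) := by rw [pow_add]; ring
        _ = (p : ℚ_[p]) ^ (d + c') * (uik * uik) := by rw [hexp]
        _ = (p : ℚ_[p]) ^ (d + c') * ((((u⁻¹ : ℤ_[p]ˣ) : ℤ_[p]) : ℚ_[p]) * (((u⁻¹ : ℤ_[p]ˣ) : ℤ_[p]) : ℚ_[p])) := by rw [huik]
        _ = (p : ℚ_[p]) ^ (d + c') * (((u⁻¹ : ℤ_[p]ˣ) : ℤ_[p]) : ℚ_[p]) * (((u⁻¹ : ℤ_[p]ˣ) : ℤ_[p]) : ℚ_[p]) := by ring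
    have hF's : F'ᵀ = F' := by
      rw [hF', Matrix.transpose_smul, Matrix.transpose_mul, Matrix.transpose_mul, hGt, hFs,
        Matrix.mul_assoc]
    have hc'2 : 2 * v + 1 ≤ c' := by omega
    have hdc' : d + 1 ≤ c' + s := by omega
    obtain ⟨U', R, hU'int, hU'eq, hRs, hRd⟩ := ih c' hc'2 hdc' F' hF's hF'd
    obtain ⟨U₀', hU₀'⟩ := hU'int
    refine ⟨U' * (1 + D), R, ⟨U₀' * Wu, ?_⟩, ?_, hRs, hRd⟩
    · rw [Units.val_mul, mc_mul, hU₀', hWuk]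
    · calc (U' * (1 + D)) * (Mk + F) * (U' * (1 + D))ᵀ
          = U' * ((1 + D) * (Mk + F) * (1 + D)ᵀ) * U'ᵀ := by
            rw [Matrix.transpose_mul]
            noncomm_ring
      _ = U' * (Mk + F') * U'ᵀ := by rw [hstep]
      _ = Mk + R := hU'eq


noncomputable def vc (x : Fin n → ℤ_[p]) : Fin n → ℚ_[p] := fun i => (x i : ℚ_[p])

lemma coe_sum {ι : Type*} (s : Finset ι) (f : ι → ℤ_[p]) :
    ((∑ i ∈ s, f i : ℤ_[p]) : ℚ_[p]) = ∑ i ∈ s, (f i : ℚ_[p]) :=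
  map_sum PadicInt.Coe.ringHom f s

lemma vc_mulVec (A : Matrix (Fin n) (Fin n) ℤ_[p]) (v : Fin n → ℤ_[p]) :
    (mc A).mulVec (vc v) = vc (A.mulVec v) := by
  ext i
  simp [mc, vc, Matrix.mulVec, dotProduct, Matrix.map_apply, coe_sum]

lemma vc_dot (v w : Fin n → ℤ_[p]) : vc v ⬝ᵥ vc w = ((v ⬝ᵥ w : ℤ_[p]) : ℚ_[p]) := by
  simp [vc, dotProduct, coe_sum]

lemma vc_add (v w : Fin n → ℤ_[p]) : vc (v + w) = vc v + vc w := by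
  ext i; simp [vc]

lemma vc_sub (v w : Fin n → ℤ_[p]) : vc (v - w) = vc v - vc w := by
  ext i; simp [vc]

lemma norm_coe_le_one (z : ℤ_[p]) : ‖(z : ℚ_[p])‖ ≤ 1 := by
  rw [← PadicInt.norm_def]; exact PadicInt.norm_le_one z

lemma exists_B (M : Matrix (Fin n) (Fin n) ℤ) (d : ℕ)
    (hd : AddMonoid.exponent (M.map (Int.cast : ℤ → ℤ_[p])).Cok = p ^ d) :
    ∃ B : Matrix (Fin n) (Fin n) ℤ_[p],
      mc (M.map (Int.cast : ℤ → ℤ_[p])) * mc B = (p : ℚ_[p]) ^ d • 1 := by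
  set M₀ := M.map (Int.cast : ℤ → ℤ_[p]) with hM₀
  have hsm : ∀ x : Fin n → ℤ_[p], ∃ u, M₀.mulVec u = (p : ℤ_[p]) ^ d • x := by
    intro x
    have h0 : (p ^ d : ℕ) • (Submodule.Quotient.mk x : M₀.Cok) = 0 := by
      rw [← hd]; exact AddMonoid.exponent_nsmul_eq_zero _
    have h1 : (Submodule.Quotient.mk ((p ^ d : ℕ) • x) : M₀.Cok) = 0 := by
      rw [← h0]
      exact map_nsmul (LinearMap.range M₀.mulVecLin).mkQ _ _
    rw [Submodule.Quotient.mk_eq_zero] at h1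
    obtain ⟨u, hu⟩ := h1
    refine ⟨u, ?_⟩
    rw [← Matrix.mulVecLin_apply, hu]
    rw [← Nat.cast_smul_eq_nsmul (R := ℤ_[p])]
    push_cast
    rfl
  choose u hu using hsm
  refine ⟨Matrix.of (fun i j => u (Pi.single j 1) i), ?_⟩
  rw [← mc_mul, show ((p : ℚ_[p]) ^ d • 1 : Matrix (Fin n) (Fin n) ℚ_[p])
    = mc ((p : ℤ_[p]) ^ d • 1) by rw [mc_pow_smul, mc_one]]
  refine congrArg mc ?_
  ext i j
  have := congrFun (hu (Pi.single j 1)) i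
  simp only [Matrix.mulVec, dotProduct] at this
  simp only [Matrix.mul_apply, Matrix.of_apply, Matrix.smul_apply, smul_eq_mul]
  rw [this]
  simp [Pi.single_apply, Matrix.one_apply, Pi.smul_apply, eq_comm]



set_option maxHeartbeats 1000000 in
lemma key (M ΔM : Matrix (Fin n) (Fin n) ℤ) (hMs : M.IsSymm) (hMd : M.det ≠ 0)
    (hΔs : ΔM.IsSymm) (d : ℕ)
    (hd : AddMonoid.exponent (M.map (Int.cast : ℤ → ℤ_[p])).Cok = p ^ d)
    (hdvd : ∀ i j, ((p : ℤ)) ^ (d + (2 * v2 p + 1)) ∣ ΔM i j) :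
    (M + ΔM).det ≠ 0 ∧
    PairedIso ((M + ΔM).map (Int.cast : ℤ → ℤ_[p])) (M.map (Int.cast : ℤ → ℤ_[p])) := by
  set cₑ := 2 * v2 p + 1 with hcₑ
  set M₀ := M.map (Int.cast : ℤ → ℤ_[p]) with hM₀
  set N₀ := (M + ΔM).map (Int.cast : ℤ → ℤ_[p]) with hN₀
  set E₀ := ΔM.map (Int.cast : ℤ → ℤ_[p]) with hE₀
  have hNME : N₀ = M₀ + E₀ := Matrix.map_add _ (by push_cast; simp) _ _
  have hM₀s : M₀ᵀ = M₀ := by rw [hM₀, ← Matrix.transpose_map, hMs.eq]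
  have hE₀s : E₀ᵀ = E₀ := by rw [hE₀, ← Matrix.transpose_map, hΔs.eq]
  -- extract the p-power from ΔM
  obtain ⟨E₁, hE₁⟩ : ∃ E₁ : Matrix (Fin n) (Fin n) ℤ_[p],
      E₀ = (p : ℤ_[p]) ^ (d + cₑ) • E₁ := by
    choose m hm using fun i j => hdvd i j
    refine ⟨Matrix.of (fun i j => ((m i j : ℤ) : ℤ_[p])), ?_⟩
    ext i j
    simp only [hE₀, Matrix.map_apply, Matrix.smul_apply, Matrix.of_apply, smul_eq_mul]
    rw [hm i j]
    push_cast
    ring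
  obtain ⟨B, hMB⟩ := exists_B (p := p) M d hd
  rw [← hM₀] at hMB
  have hM₀sK : (mc M₀)ᵀ = mc M₀ := by rw [← mc_transpose, hM₀s]
  have hE₀sK : (mc E₀)ᵀ = mc E₀ := by rw [← mc_transpose, hE₀s]
  have hEd : PD (d + cₑ) (mc E₀) := ⟨E₁, by rw [hE₁, mc_pow_smul]⟩
  obtain ⟨U, R, ⟨U₀, hU₀⟩, hUeq, hRs, hRd⟩ :=
    newton M₀ B d hM₀sK hMB (d + 1) cₑ (by omega) (by omega) (mc E₀) hE₀sK hEd
  obtain ⟨R₀, hR₀⟩ := hRd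
  have hmcN : mc N₀ = mc M₀ + mc E₀ := by rw [hNME, mc_add]
  -- the O-level congruence
  have hOeq : (U₀ : Matrix (Fin n) (Fin n) ℤ_[p]) * N₀ * ((U₀ : Matrix (Fin n) (Fin n) ℤ_[p]))ᵀ
      = M₀ + (p : ℤ_[p]) ^ (2 * d + 1) • R₀ := by
    apply mc_inj
    rw [mc_mul, mc_mul, mc_transpose, mc_add, mc_pow_smul, hU₀, hmcN, ← hR₀]
    exact hUeq
  -- the determinant statement
  obtain ⟨Se, hSe⟩ := isUnit_one_add (c := cₑ) (by omega) (B * E₁)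
  have hMSe : mc M₀ * mc (Se : Matrix (Fin n) (Fin n) ℤ_[p]) = mc N₀ := by
    rw [hSe, mc_add, mc_one, mc_pow_smul, mc_mul, Matrix.mul_add, Matrix.mul_one,
      Matrix.mul_smul, ← Matrix.mul_assoc, hMB, Matrix.smul_mul, Matrix.one_mul, smul_smul,
      ← pow_add, hmcN]
    congr 1
    rw [show mc E₀ = mc ((p : ℤ_[p]) ^ (d + cₑ) • E₁) from congrArg mc hE₁, mc_pow_smul]
    congr 1
    rw [Nat.add_comm]
  have hcast : ∀ (A : Matrix (Fin n) (Fin n) ℤ),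
      mc (A.map (Int.cast : ℤ → ℤ_[p])) = A.map ((Int.cast : ℤ → ℚ_[p])) := by
    intro A; ext i j; simp [mc, Matrix.map_apply]
  have hdetM : (mc M₀).det = ((M.det : ℤ) : ℚ_[p]) := by
    rw [hM₀, hcast M]
    exact (RingHom.map_det (Int.castRingHom ℚ_[p]) M).symm
  have hdetN : (mc N₀).det = (((M + ΔM).det : ℤ) : ℚ_[p]) := by
    rw [hN₀, hcast (M + ΔM)]
    exact (RingHom.map_det (Int.castRingHom ℚ_[p]) (M + ΔM)).symm
  have hdetSe : (mc (Se : Matrix (Fin n) (Fin n) ℤ_[p])).det ≠ 0 := by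
    have h1 : IsUnit ((Se : Matrix (Fin n) (Fin n) ℤ_[p]).det) :=
      (Matrix.isUnit_iff_isUnit_det _).1 Se.isUnit
    have h2 : (mc (Se : Matrix (Fin n) (Fin n) ℤ_[p])).det
        = (((Se : Matrix (Fin n) (Fin n) ℤ_[p]).det : ℤ_[p]) : ℚ_[p]) :=
      (RingHom.map_det PadicInt.Coe.ringHom _).symm
    rw [h2]
    simpa [PadicInt.coe_eq_zero] using h1.ne_zero
  have hdet : (M + ΔM).det ≠ 0 := by
    intro h
    have : (mc N₀).det = 0 := by rw [hdetN, h]; simp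
    rw [← hMSe, Matrix.det_mul, hdetM] at this
    rcases mul_eq_zero.1 this with h' | h'
    · exact hMd (by exact_mod_cast h')
    · exact hdetSe h'
  refine ⟨hdet, ?_⟩
  -- now the paired isomorphism
  obtain ⟨Sv, hSv⟩ := isUnit_one_add (c := d + 1) (by omega) (B * R₀)
  have hMSv : M₀ * (Sv : Matrix (Fin n) (Fin n) ℤ_[p])
      = M₀ + (p : ℤ_[p]) ^ (2 * d + 1) • R₀ := by
    apply mc_inj
    rw [mc_mul, mc_add, mc_pow_smul, hSv, mc_add, mc_one, mc_pow_smul, mc_mul,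
      Matrix.mul_add, Matrix.mul_one, Matrix.mul_smul, ← Matrix.mul_assoc, hMB,
      Matrix.smul_mul, Matrix.one_mul, smul_smul, ← pow_add]
    congr 1
    rw [show d + 1 + d = 2 * d + 1 by omega]
  set Tu : (Matrix (Fin n) (Fin n) ℤ_[p])ˣ :=
    ⟨((U₀ : Matrix (Fin n) (Fin n) ℤ_[p]))ᵀ, ((U₀⁻¹ : _ˣ) : Matrix (Fin n) (Fin n) ℤ_[p])ᵀ,
     by rw [← Matrix.transpose_mul, Units.inv_mul, Matrix.transpose_one],
     by rw [← Matrix.transpose_mul, Units.mul_inv, Matrix.transpose_one]⟩ with hTu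
  have hUN : (U₀ : Matrix (Fin n) (Fin n) ℤ_[p]) * N₀
      = M₀ * ((Sv * Tu⁻¹ : (Matrix (Fin n) (Fin n) ℤ_[p])ˣ) : Matrix (Fin n) (Fin n) ℤ_[p]) := by
    have h1 : ((U₀ : Matrix (Fin n) (Fin n) ℤ_[p]) * N₀) * (Tu : Matrix (Fin n) (Fin n) ℤ_[p])
        = M₀ * (Sv : Matrix (Fin n) (Fin n) ℤ_[p]) := by
      rw [hMSv, ← hOeq, Matrix.mul_assoc]
    have h2 := congrArg (fun A => A * ((Tu⁻¹ : _ˣ) : Matrix (Fin n) (Fin n) ℤ_[p])) h1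
    rw [Matrix.mul_assoc, Matrix.mul_assoc] at h2
    rw [show (Tu : Matrix (Fin n) (Fin n) ℤ_[p]) * ((Tu⁻¹ : _ˣ) : Matrix (Fin n) (Fin n) ℤ_[p])
      = 1 from Units.mul_inv _] at h2
    rw [Matrix.mul_one] at h2
    rw [h2, Units.val_mul, Matrix.mul_assoc]
  -- the linear equivalence from U₀
  have h₁ : ((U₀ : Matrix (Fin n) (Fin n) ℤ_[p]).mulVecLin).comp
      (((U₀⁻¹ : _ˣ) : Matrix (Fin n) (Fin n) ℤ_[p]).mulVecLin) = LinearMap.id := by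
    rw [← Matrix.mulVecLin_mul, Units.mul_inv, Matrix.mulVecLin_one]
  have h₂ : (((U₀⁻¹ : _ˣ) : Matrix (Fin n) (Fin n) ℤ_[p]).mulVecLin).comp
      ((U₀ : Matrix (Fin n) (Fin n) ℤ_[p]).mulVecLin) = LinearMap.id := by
    rw [← Matrix.mulVecLin_mul, Units.inv_mul, Matrix.mulVecLin_one]
  set eU : (Fin n → ℤ_[p]) ≃ₗ[ℤ_[p]] (Fin n → ℤ_[p]) :=
    LinearEquiv.ofLinear (U₀ : Matrix (Fin n) (Fin n) ℤ_[p]).mulVecLin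
      ((U₀⁻¹ : _ˣ) : Matrix (Fin n) (Fin n) ℤ_[p]).mulVecLin h₁ h₂ with heU
  have hWsurj : LinearMap.range
      (((Sv * Tu⁻¹ : _ˣ) : Matrix (Fin n) (Fin n) ℤ_[p]).mulVecLin) = ⊤ := by
    rw [LinearMap.range_eq_top]
    intro y
    refine ⟨(((Sv * Tu⁻¹)⁻¹ : _ˣ) : Matrix (Fin n) (Fin n) ℤ_[p]).mulVec y, ?_⟩
    rw [Matrix.mulVecLin_apply, Matrix.mulVec_mulVec, Units.mul_inv, Matrix.one_mulVec]
  have hmap : (LinearMap.range N₀.mulVecLin).map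
      (eU : (Fin n → ℤ_[p]) →ₗ[ℤ_[p]] (Fin n → ℤ_[p]))
      = LinearMap.range M₀.mulVecLin := by
    have heq : (eU : (Fin n → ℤ_[p]) →ₗ[ℤ_[p]] (Fin n → ℤ_[p]))
        = (U₀ : Matrix (Fin n) (Fin n) ℤ_[p]).mulVecLin := rfl
    rw [heq, ← LinearMap.range_comp, ← Matrix.mulVecLin_mul, hUN, Matrix.mulVecLin_mul,
      LinearMap.range_comp, hWsurj, Submodule.map_top]
  set e := Submodule.Quotient.equiv (LinearMap.range N₀.mulVecLin)
    (LinearMap.range M₀.mulVecLin) eU hmap with he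
  refine ⟨e.toAddEquiv, ?_⟩
  have happ : ∀ X : Fin n → ℤ_[p], e.toAddEquiv (Submodule.Quotient.mk X)
      = Submodule.Quotient.mk ((U₀ : Matrix (Fin n) (Fin n) ℤ_[p]).mulVec X) := by
    intro X
    rfl
  intro X Y X' Y' hX hY
  rw [happ X, Submodule.Quotient.eq] at hX
  rw [happ Y, Submodule.Quotient.eq] at hY
  obtain ⟨xu, hxu⟩ := hX
  obtain ⟨yu, hyu⟩ := hY
  rw [Matrix.mulVecLin_apply] at hxu hyu
  -- K-side inverses
  set Mk := mc M₀ with hMk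
  set Bk := mc B with hBk
  have hpd : ((p : ℚ_[p]) ^ d) ≠ 0 := pow_ne_zero _ pK_ne
  set Gm : Matrix (Fin n) (Fin n) ℚ_[p] := ((p : ℚ_[p]) ^ d)⁻¹ • Bk with hGm
  have hMGm : Mk * Gm = 1 := by
    rw [hGm, Matrix.mul_smul, hMB, smul_smul, inv_mul_cancel₀ hpd, one_smul]
  have hGmM : Gm * Mk = 1 := mul_eq_one_comm.mp hMGm
  have hMinv : Mk⁻¹ = Gm := Matrix.inv_eq_right_inv hMGm
  set Svk := mc ((Sv : (Matrix (Fin n) (Fin n) ℤ_[p])ˣ) : Matrix (Fin n) (Fin n) ℤ_[p]) with hSvk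
  set Svik := mc ((Sv⁻¹ : (Matrix (Fin n) (Fin n) ℤ_[p])ˣ) : Matrix (Fin n) (Fin n) ℤ_[p])
    with hSvik
  have hSvSvi : Svk * Svik = 1 := by rw [hSvk, hSvik, ← mc_mul, Units.mul_inv, mc_one]
  have hSviSv : Svik * Svk = 1 := by rw [hSvk, hSvik, ← mc_mul, Units.inv_mul, mc_one]
  have hM₂ : Mk * Svk = Mk + R := by
    have := congrArg mc hMSv
    rw [mc_mul, mc_add, mc_pow_smul, ← hR₀] at this
    exact this
  set Gn : Matrix (Fin n) (Fin n) ℚ_[p] := ((p : ℚ_[p]) ^ d)⁻¹ • (Svik * Bk) with hGn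
  have hM₂Gn : (Mk + R) * Gn = 1 := by
    rw [← hM₂, hGn, Matrix.mul_smul, Matrix.mul_assoc, ← Matrix.mul_assoc Svk, hSvSvi,
      Matrix.one_mul, hMB, smul_smul, inv_mul_cancel₀ hpd, one_smul]
  -- K-side unit coercions
  set Uk := mc ((U₀ : (Matrix (Fin n) (Fin n) ℤ_[p])ˣ) : Matrix (Fin n) (Fin n) ℤ_[p]) with hUk
  set Uik := mc ((U₀⁻¹ : (Matrix (Fin n) (Fin n) ℤ_[p])ˣ) : Matrix (Fin n) (Fin n) ℤ_[p])
    with hUik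
  set Tik := mc ((Tu⁻¹ : (Matrix (Fin n) (Fin n) ℤ_[p])ˣ) : Matrix (Fin n) (Fin n) ℤ_[p])
    with hTik
  have hUiU : Uik * Uk = 1 := by rw [hUik, hUk, ← mc_mul, Units.inv_mul, mc_one]
  have hUUi : Uk * Uik = 1 := by rw [hUik, hUk, ← mc_mul, Units.mul_inv, mc_one]
  have hUtT : (Uk)ᵀ * Tik = 1 := by
    rw [hUk, hTik, ← mc_transpose, ← mc_mul,
      show ((U₀ : (Matrix (Fin n) (Fin n) ℤ_[p])ˣ) : Matrix (Fin n) (Fin n) ℤ_[p])ᵀ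
        = (Tu : Matrix (Fin n) (Fin n) ℤ_[p]) from rfl, Units.mul_inv, mc_one]
  have hTUt : Tik * (Uk)ᵀ = 1 := by
    rw [hUk, hTik, ← mc_transpose, ← mc_mul,
      show ((U₀ : (Matrix (Fin n) (Fin n) ℤ_[p])ˣ) : Matrix (Fin n) (Fin n) ℤ_[p])ᵀ
        = (Tu : Matrix (Fin n) (Fin n) ℤ_[p]) from rfl, Units.inv_mul, mc_one]
  have hKeq : Uk * mc N₀ * (Uk)ᵀ = Mk + R := by
    rw [hU₀, hmcN]
    exact hUeq
  set W : Matrix (Fin n) (Fin n) ℚ_[p] := (Uk)ᵀ * Gn * Uk with hW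
  have hmcN₀ : mc N₀ = Uik * (Mk + R) * Tik := by
    rw [← hKeq]
    exact (calc Uik * (Uk * mc N₀ * (Uk)ᵀ) * Tik
        = (Uik * Uk) * (mc N₀ * ((Uk)ᵀ * Tik)) := by simp only [Matrix.mul_assoc]
      _ = mc N₀ := by rw [hUiU, hUtT, Matrix.one_mul, Matrix.mul_one]).symm
  have hNW : mc N₀ * W = 1 := by
    rw [hmcN₀, hW]
    calc (Uik * (Mk + R) * Tik) * ((Uk)ᵀ * Gn * Uk)
        = Uik * (((Mk + R) * ((Tik * (Uk)ᵀ) * Gn)) * Uk) := by simp only [Matrix.mul_assoc]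
      _ = Uik * (((Mk + R) * Gn) * Uk) := by rw [hTUt, Matrix.one_mul]
      _ = Uik * Uk := by rw [hM₂Gn, Matrix.one_mul]
      _ = 1 := hUiU
  have hNinv : (mc N₀)⁻¹ = W := Matrix.inv_eq_right_inv hNW
  -- difference of the two inverses
  set Z₀ : Matrix (Fin n) (Fin n) ℤ_[p] :=
    ((Sv⁻¹ : (Matrix (Fin n) (Fin n) ℤ_[p])ˣ) : Matrix (Fin n) (Fin n) ℤ_[p]) * (B * R₀) * B
    with hZ₀
  have hSvkval : Svk = 1 + (p : ℚ_[p]) ^ (d + 1) • (Bk * mc R₀) := by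
    rw [hSvk, hSv, mc_add, mc_one, mc_pow_smul, mc_mul]
  have hSvik1 : Svik - 1 = -((p : ℚ_[p]) ^ (d + 1) • (Svik * (Bk * mc R₀))) := by
    have h1 : Svik * Svk = Svik + (p : ℚ_[p]) ^ (d + 1) • (Svik * (Bk * mc R₀)) := by
      rw [hSvkval, Matrix.mul_add, Matrix.mul_one, Matrix.mul_smul]
    rw [← hSviSv, h1]
    abel
  have hmcZ₀ : mc Z₀ = Svik * (Bk * mc R₀) * Bk := by
    rw [hZ₀, mc_mul, mc_mul, mc_mul]
  have hdiff : Gn - Gm = -((p : ℚ_[p]) • mc Z₀) := by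
    rw [hGn, hGm, ← smul_sub,
      show Svik * Bk - Bk = (Svik - 1) * Bk by rw [Matrix.sub_mul, Matrix.one_mul],
      hSvik1, hmcZ₀]
    rw [Matrix.neg_mul, Matrix.smul_mul, smul_neg, smul_smul,
      show ((p : ℚ_[p]) ^ d)⁻¹ * (p : ℚ_[p]) ^ (d + 1) = (p : ℚ_[p]) by
        rw [pow_succ]; field_simp]
  have hGnGm : Gn = Gm - (p : ℚ_[p]) • mc Z₀ := by
    have h := hdiff
    rw [sub_eq_iff_eq_add] at h
    rw [h]; abel
  -- the vectors
  set Xs := (U₀ : Matrix (Fin n) (Fin n) ℤ_[p]) *ᵥ X with hXs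
  set Ys := (U₀ : Matrix (Fin n) (Fin n) ℤ_[p]) *ᵥ Y with hYs
  have hXv : vc X' = vc Xs - Mk *ᵥ vc xu := by
    rw [show X' = Xs - M₀ *ᵥ xu by rw [hxu]; abel, vc_sub]
    congr 1
    exact (vc_mulVec _ _).symm
  have hYv : vc Y' = vc Ys - Mk *ᵥ vc yu := by
    rw [show Y' = Ys - M₀ *ᵥ yu by rw [hyu]; abel, vc_sub]
    congr 1
    exact (vc_mulVec _ _).symm
  -- the two pairing values
  have h1 : pairVal N₀ X Y = vc Xs ⬝ᵥ (Gn *ᵥ vc Ys) := by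
    show vc X ⬝ᵥ ((mc N₀)⁻¹ *ᵥ vc Y) = _
    rw [hNinv, hW, ← Matrix.mulVec_mulVec, ← Matrix.mulVec_mulVec,
      Matrix.dotProduct_mulVec, Matrix.vecMul_transpose, hUk, vc_mulVec, vc_mulVec, ← hXs, ← hYs]
  have h2 : pairVal M₀ X' Y' = vc X' ⬝ᵥ (Gm *ᵥ vc Y') := by
    show vc X' ⬝ᵥ ((mc M₀)⁻¹ *ᵥ vc Y') = _
    rw [hMinv]
  have h3 : vc Xs ⬝ᵥ (Gn *ᵥ vc Ys)
      = vc Xs ⬝ᵥ (Gm *ᵥ vc Ys) - (((p : ℤ_[p]) * (Xs ⬝ᵥ (Z₀ *ᵥ Ys)) : ℤ_[p]) : ℚ_[p]) := by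
    rw [hGnGm, Matrix.sub_mulVec, dotProduct_sub]
    congr 1
    rw [Matrix.smul_mulVec, dotProduct_smul, vc_mulVec, vc_dot, smul_eq_mul]
    push_cast
    ring
  have hswap : ∀ w : Fin n → ℚ_[p], w ᵥ* Mk = Mk *ᵥ w := by
    intro w
    conv_lhs => rw [← hM₀sK]
    exact Matrix.vecMul_transpose _ _
  have h4 : vc X' ⬝ᵥ (Gm *ᵥ vc Y')
      = vc Xs ⬝ᵥ (Gm *ᵥ vc Ys) - ((xu ⬝ᵥ Y' : ℤ_[p]) : ℚ_[p]) - ((Xs ⬝ᵥ yu : ℤ_[p]) : ℚ_[p]) := by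
    rw [hXv, sub_dotProduct]
    have hA : (Mk *ᵥ vc xu) ⬝ᵥ (Gm *ᵥ vc Y') = ((xu ⬝ᵥ Y' : ℤ_[p]) : ℚ_[p]) := by
      rw [dotProduct_comm, Matrix.dotProduct_mulVec, hswap,
        Matrix.mulVec_mulVec, hMGm, Matrix.one_mulVec, dotProduct_comm, vc_dot]
    have hB : vc Xs ⬝ᵥ (Gm *ᵥ vc Y')
        = vc Xs ⬝ᵥ (Gm *ᵥ vc Ys) - ((Xs ⬝ᵥ yu : ℤ_[p]) : ℚ_[p]) := by
      rw [hYv, Matrix.mulVec_sub, Matrix.mulVec_mulVec, hGmM, Matrix.one_mulVec,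
        dotProduct_sub, vc_dot]
    rw [hA, hB]
    ring
  rw [h1, h2, h3, h4]
  have hfinal : vc Xs ⬝ᵥ (Gm *ᵥ vc Ys) - (((p : ℤ_[p]) * (Xs ⬝ᵥ (Z₀ *ᵥ Ys)) : ℤ_[p]) : ℚ_[p])
      - (vc Xs ⬝ᵥ (Gm *ᵥ vc Ys) - ((xu ⬝ᵥ Y' : ℤ_[p]) : ℚ_[p]) - ((Xs ⬝ᵥ yu : ℤ_[p]) : ℚ_[p]))
      = (((-((p : ℤ_[p]) * (Xs ⬝ᵥ (Z₀ *ᵥ Ys))) + xu ⬝ᵥ Y' + Xs ⬝ᵥ yu : ℤ_[p])) : ℚ_[p]) := by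
    push_cast
    ring
  rw [hfinal]
  exact norm_coe_le_one _


end S14

/-- Let `M ∈ Sym_n(ℤ)` be nonsingular and `P` a nonempty finite set of
primes. For `p ∈ P` let `d p = Dep_p(Cok(M)_p)` (i.e. the exponent of `Cok(M)_p` is `p^(d p)`),
set `e_p = d p + 3` if `p = 2` and `d p + 1` otherwise, and `a = ∏_{p ∈ P} p^{e_p}`. Then for
every symmetric `ΔM` all of whose entries are divisible by `a`, the matrix `M + ΔM` is
nonsingular and for every `p ∈ P` its paired cokernel at `p` is isomorphic to that of `M`. -/
theorem stmt_14 {n : ℕ} (hn : 1 ≤ n) (M : Matrix (Fin n) (Fin n) ℤ)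
    (hMs : M.IsSymm) (hMd : M.det ≠ 0)
    (P : Finset ℕ) (hP : P.Nonempty) (hprime : ∀ p ∈ P, p.Prime)
    (d : ℕ → ℕ)
    (hd : ∀ (p : ℕ) [Fact p.Prime], p ∈ P →
      AddMonoid.exponent (M.map (Int.cast : ℤ → ℤ_[p])).Cok = p ^ d p)
    (a : ℕ) (ha : a = ∏ p ∈ P, p ^ (if p = 2 then d p + 3 else d p + 1))
    (ΔM : Matrix (Fin n) (Fin n) ℤ) (hΔs : ΔM.IsSymm)
    (hΔ : ∀ i j, (a : ℤ) ∣ ΔM i j) :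
    (M + ΔM).det ≠ 0 ∧
    ∀ (p : ℕ) [Fact p.Prime], p ∈ P →
      PairedIso ((M + ΔM).map (Int.cast : ℤ → ℤ_[p])) (M.map (Int.cast : ℤ → ℤ_[p])) := by
  have hkey : ∀ (p : ℕ) [Fact p.Prime], p ∈ P →
      (M + ΔM).det ≠ 0 ∧
      PairedIso ((M + ΔM).map (Int.cast : ℤ → ℤ_[p])) (M.map (Int.cast : ℤ → ℤ_[p])) := by
    intro p hfp hpP
    apply S14.key M ΔM hMs hMd hΔs (d p) (hd p hpP)
    intro i j
    have h1 : p ^ (if p = 2 then d p + 3 else d p + 1) ∣ a :=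
      ha ▸ Finset.dvd_prod_of_mem _ hpP
    have h2 : (d p + (2 * S14.v2 p + 1)) = (if p = 2 then d p + 3 else d p + 1) := by
      by_cases h : p = 2 <;> simp [S14.v2, h] <;> omega
    have h3 : ((p : ℤ)) ^ (if p = 2 then d p + 3 else d p + 1) ∣ (a : ℤ) := by
      exact_mod_cast Int.natCast_dvd_natCast.2 h1
    rw [h2]
    exact h3.trans (hΔ i j)
  obtain ⟨p₀, hp₀⟩ := hP
  haveI : Fact p₀.Prime := ⟨hprime p₀ hp₀⟩
  exact ⟨(hkey p₀ hp₀).1, fun p _ hpP => (hkey p hpP).2⟩
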